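/- Let μ be a regular Borel measure on ℚ_p^N and let f : ℚ_p^N ∖ {0} → [0,∞) be a continuous, locally integrable function such that ∫_{ℚ_p^N} f(x) φ(x) d^N x = ∫_{ℚ_p^N} (Fφ)(ξ) dμ(ξ) for every test function φ ∈ D(ℚ_p^N). Then for all real-valued test functions φ, ψ ∈ D_ℝ(ℚ_p^N), ∫_{ℚ_p^N} ∫_{ℚ_p^N} φ(x) f(x−y) ψ(y) d^N x d^N y = ∫_{ℚ_p^N} (Fφ)(ξ) conj((Fψ)(ξ)) dμ(ξ). -/

import Mathlib

open MeasureTheory Complex Filter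

section Preamble

variable (p : ℕ) [Fact p.Prime]

open Classical in
/-- The `p`-adic fractional part `{y}_p ∈ ℚ` of `y ∈ ℚ_p`. -/
noncomputable def padicFrac (y : ℚ_[p]) : ℚ :=
  if h : ∃ n : ℕ, ‖y * (p : ℚ_[p]) ^ n‖ ≤ 1 then
    (PadicInt.appr (⟨y * (p : ℚ_[p]) ^ Nat.find h, Nat.find_spec h⟩ : ℤ_[p]) (Nat.find h) : ℚ)
      / (p : ℚ) ^ (Nat.find h)
  else 0

/-- The standard additive character `χ_p(y) = exp(2 π i {y}_p)` of `ℚ_p`. -/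
noncomputable def padicChar (y : ℚ_[p]) : ℂ :=
  Complex.exp (2 * Real.pi * Complex.I * (padicFrac p y : ℂ))

noncomputable instance : MeasurableSpace ℚ_[p] := borel _
instance : BorelSpace ℚ_[p] := ⟨rfl⟩

variable (N : ℕ)

/-- The Haar measure `d^N x` on `ℚ_p^N`, normalized so that `ℤ_p^N` (the closed unit
ball) has measure `1`. -/
noncomputable def QpHaar : Measure (Fin N → ℚ_[p]) :=
  Measure.addHaarMeasure
    ⟨⟨Metric.closedBall 0 1, isCompact_closedBall 0 1⟩,
      Set.Nonempty.mono Metric.ball_subset_interior_closedBall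
        (Metric.nonempty_ball.mpr one_pos)⟩

/-- The Fourier transform `Ff(ξ) = ∫ χ_p(-ξ·x) f(x) d^N x` on `ℚ_p^N`. -/
noncomputable def QpFT (f : (Fin N → ℚ_[p]) → ℂ) (ξ : Fin N → ℚ_[p]) : ℂ :=
  ∫ x, padicChar p (-(∑ j, ξ j * x j)) * f x ∂(QpHaar p N)

/-- Evaluation at `ξ ∈ ℚ_p^N` of a polynomial with coefficients in `ℤ_p`. -/
noncomputable def evalPoly (a : MvPolynomial (Fin N) ℤ_[p]) (ξ : Fin N → ℚ_[p]) : ℚ_[p] :=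
  MvPolynomial.eval ξ (MvPolynomial.map (PadicInt.Coe.ringHom (p := p)) a)

/-- `a` is an elliptic polynomial of degree `d`: homogeneous of degree `d` and
`a(ξ) = 0 ↔ ξ = 0`. -/
def IsElliptic (a : MvPolynomial (Fin N) ℤ_[p]) (d : ℕ) : Prop :=
  0 < d ∧ MvPolynomial.IsHomogeneous a d ∧
    ∀ ξ : Fin N → ℚ_[p], evalPoly p N a ξ = 0 ↔ ξ = 0

/-- The `p`-adic heat kernel `Γ(t,x) = ∫ χ_p(x·ξ) e^{-t |a(ξ)|_p^β} d^N ξ`. -/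
noncomputable def heatKer (a : MvPolynomial (Fin N) ℤ_[p]) (β t : ℝ)
    (x : Fin N → ℚ_[p]) : ℂ :=
  ∫ ξ, padicChar p (∑ j, x j * ξ j) *
    (Real.exp (-(t * ‖evalPoly p N a ξ‖ ^ β)) : ℝ) ∂(QpHaar p N)

/-- Bruhat--Schwartz test functions: locally constant with compact support. -/
def IsTestFn (f : (Fin N → ℚ_[p]) → ℂ) : Prop :=
  IsLocallyConstant f ∧ HasCompactSupport f

/-- The Bruhat--Schwartz space `D(ℚ_p^N)` as a `ℂ`-subspace of all functions. -/
noncomputable def BSspace : Submodule ℂ ((Fin N → ℚ_[p]) → ℂ) where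
  carrier := {f | IsLocallyConstant f ∧ HasCompactSupport f}
  add_mem' hf hg := ⟨hf.1.add hg.1, hf.2.add hg.2⟩
  zero_mem' := ⟨IsLocallyConstant.const 0, by
    simp [HasCompactSupport, tsupport, Function.support, isCompact_empty]⟩
  smul_mem' c f hf := by
    refine ⟨?_, ?_⟩
    · show IsLocallyConstant fun x => c • f x
      exact hf.1.comp (c • ·)
    · show HasCompactSupport fun x => c • f x
      exact hf.2.comp_left (g := (c • ·)) (smul_zero c)

open Classical in
/-- The pairing of a distribution `F ∈ D'(ℚ_p^N)` with a function which is
(known to be) a test function. -/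
noncomputable def pairingD (F : BSspace p N →ₗ[ℂ] ℂ) (g : (Fin N → ℚ_[p]) → ℂ) : ℂ :=
  if h : IsTestFn p N g then F ⟨g, h⟩ else 0

/-- Convolution `(f ∗ g)(x) = ∫ f(y) g(x − y) d^N y` on `ℚ_p^N`. -/
noncomputable def QpConv (f g : (Fin N → ℚ_[p]) → ℂ) (x : Fin N → ℚ_[p]) : ℂ :=
  ∫ y, f y * g (x - y) ∂(QpHaar p N)

open Classical in
/-- The Bessel potential `K_α` on `ℚ_p^N`. -/
noncomputable def besselK (α : ℝ) (x : Fin N → ℚ_[p]) : ℝ :=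
  if x = 0 then 0
  else if ‖x‖ ≤ 1 then
    if α = N then (1 - (p : ℝ) ^ (-(N : ℝ))) * Real.logb p ((p : ℝ) / ‖x‖)
    else ((1 - (p : ℝ) ^ (-α)) / (1 - (p : ℝ) ^ (α - (N : ℝ)))) *
      (‖x‖ ^ (α - (N : ℝ)) - (p : ℝ) ^ (α - (N : ℝ)))
  else 0

/-- `I₀(t,x) = (Γ(t)∗u₀)(x)` for `t > 0`, and `I₀(0,x) = u₀(x)`. -/
noncomputable def I0 (a : MvPolynomial (Fin N) ℤ_[p]) (β : ℝ) (u₀ : (Fin N → ℚ_[p]) → ℝ)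
    (t : ℝ) (x : Fin N → ℚ_[p]) : ℂ :=
  if t = 0 then (u₀ x : ℂ)
  else ∫ y, heatKer p N a β t (x - y) * (u₀ y : ℂ) ∂(QpHaar p N)

/-- The Hilbert space `U`: the completion of `D_ℝ(ℚ_p^N)` with respect to the
semi-inner product `⟨φ,ψ⟩_U = ∫ Fφ conj(Fψ) dμ`, realized concretely as the closure
in `L²(μ;ℂ)` of the space of Fourier transforms of real-valued test functions. -/
noncomputable def Uspace (μ : Measure (Fin N → ℚ_[p])) : Submodule ℝ (Lp ℂ 2 μ) :=
  (Submodule.span ℝ {g : Lp ℂ 2 μ | ∃ φ : (Fin N → ℚ_[p]) → ℝ,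
      IsLocallyConstant φ ∧ HasCompactSupport φ ∧
      (g : (Fin N → ℚ_[p]) → ℂ) =ᵐ[μ] QpFT p N fun x => (φ x : ℂ)}).topologicalClosure

end Preamble

section AuxLemmas

variable {p : ℕ} [Fact p.Prime]


lemma padicFrac_spec (y : ℚ_[p]) :
    (∃ n : ℕ, ∃ m : ℤ, padicFrac p y * (p : ℚ) ^ n = m) ∧
      ‖((padicFrac p y : ℚ) : ℚ_[p]) - y‖ ≤ 1 := by
  have hp1 : (1 : ℝ) < p := by exact_mod_cast (Fact.out : p.Prime).one_lt
  have hp0 : (0 : ℝ) < p := lt_trans one_pos hp1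
  have hpQ : (p : ℚ) ≠ 0 := by exact_mod_cast (Fact.out : p.Prime).ne_zero
  have hpQp : (p : ℚ_[p]) ≠ 0 := by exact_mod_cast (Fact.out : p.Prime).ne_zero
  have hex : ∃ n : ℕ, ‖y * (p : ℚ_[p]) ^ n‖ ≤ 1 := by
    obtain ⟨n, hn⟩ := pow_unbounded_of_one_lt ‖y‖ hp1
    refine ⟨n, ?_⟩
    rw [norm_mul, norm_pow, Padic.norm_p, inv_pow, ← div_eq_mul_inv,
      div_le_one (by positivity)]
    exact hn.le
  rw [padicFrac, dif_pos hex]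
  set n := Nat.find hex with hn
  set z : ℤ_[p] := ⟨y * (p : ℚ_[p]) ^ n, Nat.find_spec hex⟩ with hzdef
  constructor
  · exact ⟨n, (z.appr n : ℤ), by rw [div_mul_cancel₀ _ (pow_ne_zero _ hpQ)]; norm_cast; exact congrArg z.appr ((Nat.find_eq_iff _).2 ⟨by rw [hn]; exact_mod_cast Nat.find_spec hex, fun m hm => by exact_mod_cast Nat.find_min hex hm⟩)⟩
  · have h1 : z - (z.appr n : ℤ_[p]) ∈ Ideal.span {(p : ℤ_[p]) ^ n} := PadicInt.appr_spec n z
    rw [← PadicInt.norm_le_pow_iff_mem_span_pow] at h1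
    have h2 : ‖(z : ℚ_[p]) - ((z.appr n : ℕ) : ℚ_[p])‖ ≤ (p : ℝ) ^ (-(n : ℤ)) := by
      have : ((z - (z.appr n : ℤ_[p]) : ℤ_[p]) : ℚ_[p]) = (z : ℚ_[p]) - ((z.appr n : ℕ) : ℚ_[p]) := by
        push_cast; ring
      rw [← this]
      exact_mod_cast h1
    have hzy : (z : ℚ_[p]) = y * (p : ℚ_[p]) ^ n := rfl
    have key : ((((z.appr n : ℚ) / (p : ℚ) ^ n : ℚ)) : ℚ_[p]) - y
        = -((z : ℚ_[p]) - ((z.appr n : ℕ) : ℚ_[p])) / (p : ℚ_[p]) ^ n := by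
      rw [hzy]
      push_cast
      field_simp
      ring
    rw [key, norm_div, norm_neg, norm_pow, Padic.norm_p]
    rw [div_le_one (by positivity)]
    calc ‖(z : ℚ_[p]) - ((z.appr n : ℕ) : ℚ_[p])‖ ≤ (p : ℝ) ^ (-(n : ℤ)) := h2
      _ = ((p : ℝ)⁻¹) ^ n := by rw [zpow_neg, zpow_natCast, inv_pow]

lemma rat_int_of_padic {q : ℚ} {n : ℕ} {m : ℤ} (hm : q * (p : ℚ) ^ n = m)
    (hq : ‖((q : ℚ) : ℚ_[p])‖ ≤ 1) : ∃ k : ℤ, q = (k : ℚ) := by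
  have hp0 : (0 : ℝ) < p := by exact_mod_cast (Fact.out : p.Prime).pos
  have hpQ : (p : ℚ) ≠ 0 := by exact_mod_cast (Fact.out : p.Prime).ne_zero
  have hcast : ((m : ℚ_[p])) = ((q : ℚ) : ℚ_[p]) * (p : ℚ_[p]) ^ n := by
    have h := congrArg (fun t : ℚ => ((t : ℚ) : ℚ_[p])) hm
    push_cast at h
    exact h.symm
  have h2 : ‖(m : ℚ_[p])‖ ≤ (p : ℝ) ^ (-(n : ℤ)) := by
    rw [hcast, norm_mul, norm_pow, Padic.norm_p]
    calc ‖((q : ℚ) : ℚ_[p])‖ * ((p : ℝ)⁻¹) ^ n ≤ 1 * ((p : ℝ)⁻¹) ^ n := by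
          apply mul_le_mul_of_nonneg_right hq (by positivity)
      _ = (p : ℝ) ^ (-(n : ℤ)) := by rw [one_mul, zpow_neg, zpow_natCast, inv_pow]
  obtain ⟨k, hk⟩ := (Padic.norm_int_le_pow_iff_dvd m n).1 h2
  refine ⟨k, ?_⟩
  have hpn : ((p : ℚ)) ^ n ≠ 0 := pow_ne_zero _ hpQ
  apply mul_right_cancel₀ hpn
  rw [hm, hk]; push_cast; ring

lemma padicChar_add (a b : ℚ_[p]) :
    padicChar p (a + b) = padicChar p a * padicChar p b := by
  obtain ⟨⟨n1, m1, hm1⟩, hc1⟩ := padicFrac_spec (a + b)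
  obtain ⟨⟨n2, m2, hm2⟩, hc2⟩ := padicFrac_spec a
  obtain ⟨⟨n3, m3, hm3⟩, hc3⟩ := padicFrac_spec b
  set r : ℚ := padicFrac p (a + b) - padicFrac p a - padicFrac p b with hr
  have hden : r * (p : ℚ) ^ (n1 + n2 + n3)
      = ((m1 * p ^ (n2 + n3) - m2 * p ^ (n1 + n3) - m3 * p ^ (n1 + n2) : ℤ) : ℚ) := by
    push_cast
    rw [← hm1, ← hm2, ← hm3, hr]
    ring
  have hnorm : ‖((r : ℚ) : ℚ_[p])‖ ≤ 1 := by
    have hreq : ((r : ℚ) : ℚ_[p]) = (((padicFrac p (a + b) : ℚ) : ℚ_[p]) - (a + b))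
        + ((a - ((padicFrac p a : ℚ) : ℚ_[p])) + (b - ((padicFrac p b : ℚ) : ℚ_[p]))) := by
      rw [hr]; push_cast; ring
    rw [hreq]
    refine le_trans (Padic.nonarchimedean _ _) (max_le hc1 ?_)
    refine le_trans (Padic.nonarchimedean _ _) (max_le ?_ ?_)
    · rw [norm_sub_rev]; exact hc2
    · rw [norm_sub_rev]; exact hc3
  obtain ⟨k, hk⟩ := rat_int_of_padic hden hnorm
  have hfr : (padicFrac p (a + b) : ℂ)
      = (padicFrac p a : ℂ) + (padicFrac p b : ℂ) + (k : ℂ) := by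
    have : padicFrac p (a + b) = padicFrac p a + padicFrac p b + (k : ℚ) := by
      rw [← hk, hr]; ring
    exact_mod_cast this
  rw [padicChar, padicChar, padicChar, hfr,
    show 2 * (Real.pi : ℂ) * Complex.I * ((padicFrac p a : ℂ) + (padicFrac p b : ℂ) + (k : ℂ))
      = (2 * (Real.pi : ℂ) * Complex.I * (padicFrac p a : ℂ)
        + 2 * (Real.pi : ℂ) * Complex.I * (padicFrac p b : ℂ))
        + (k : ℂ) * (2 * (Real.pi : ℂ) * Complex.I) by ring,
    Complex.exp_add, Complex.exp_int_mul_two_pi_mul_I, mul_one, Complex.exp_add]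

lemma padicChar_eq_one {y : ℚ_[p]} (hy : ‖y‖ ≤ 1) : padicChar p y = 1 := by
  obtain ⟨⟨n, m, hm⟩, hclose⟩ := padicFrac_spec y
  have hnorm : ‖((padicFrac p y : ℚ) : ℚ_[p])‖ ≤ 1 := by
    have : ((padicFrac p y : ℚ) : ℚ_[p]) = (((padicFrac p y : ℚ) : ℚ_[p]) - y) + y := by ring
    rw [this]
    exact le_trans (Padic.nonarchimedean _ _) (max_le hclose hy)
  obtain ⟨k, hk⟩ := rat_int_of_padic hm hnorm
  rw [padicChar, show (padicFrac p y : ℂ) = (k : ℂ) by exact_mod_cast hk,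
    show 2 * (Real.pi : ℂ) * Complex.I * (k : ℂ) = (k : ℂ) * (2 * (Real.pi : ℂ) * Complex.I)
      by ring, Complex.exp_int_mul_two_pi_mul_I]

lemma padicChar_abs (y : ℚ_[p]) : ‖padicChar p y‖ = 1 := by
  rw [padicChar, Complex.norm_exp]
  have : (2 * (Real.pi : ℂ) * Complex.I * ((padicFrac p y : ℚ) : ℂ)).re = 0 := by
    have : (2 * (Real.pi : ℂ) * Complex.I * ((padicFrac p y : ℚ) : ℂ))
        = ((2 * Real.pi * ((padicFrac p y : ℚ) : ℝ) : ℝ) : ℂ) * Complex.I := by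
      push_cast; ring
    rw [this]; simp
  rw [this, Real.exp_zero]

lemma padicChar_ne_zero (y : ℚ_[p]) : padicChar p y ≠ 0 := by
  intro h
  have := padicChar_abs y
  rw [h] at this
  simp at this

lemma padicChar_neg (y : ℚ_[p]) : padicChar p (-y) = (starRingEnd ℂ) (padicChar p y) := by
  have h1 : padicChar p (-y) * padicChar p y = 1 := by
    rw [← padicChar_add, neg_add_cancel, padicChar_eq_one (by simp)]
  have h2 : (starRingEnd ℂ) (padicChar p y) * padicChar p y = 1 := by
    rw [mul_comm, Complex.mul_conj, Complex.normSq_eq_norm_sq, padicChar_abs]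
    norm_num
  exact mul_right_cancel₀ (padicChar_ne_zero y) (h1.trans h2.symm)

lemma isLocallyConstant_padicChar : IsLocallyConstant (padicChar p) := by
  rw [IsLocallyConstant.iff_exists_open]
  intro x
  refine ⟨Metric.ball x 1, Metric.isOpen_ball, Metric.mem_ball_self one_pos, fun y hy => ?_⟩
  have h1 : ‖y - x‖ ≤ 1 := le_of_lt (by simpa [dist_eq_norm] using hy)
  have : y = x + (y - x) := by ring
  rw [this, padicChar_add, padicChar_eq_one h1, mul_one]

lemma continuous_padicChar : Continuous (padicChar p) :=
  isLocallyConstant_padicChar.continuous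


variable {N : ℕ}

noncomputable instance QpHaar.instIsAddHaarMeasure (p : ℕ) [Fact p.Prime] (N : ℕ) :
    (QpHaar p N).IsAddHaarMeasure := Measure.isAddHaarMeasure_addHaarMeasure _

lemma pi_dist_max (x y z : Fin N → ℚ_[p]) : dist x z ≤ max (dist x y) (dist y z) := by
  rw [dist_pi_le_iff (le_max_iff.2 (Or.inl dist_nonneg))]
  intro i
  exact le_trans (dist_triangle_max _ _ _)
    (max_le_max (dist_le_pi_dist x y i) (dist_le_pi_dist y z i))

lemma uniform_lc {α : Type*} [Zero α] {f : (Fin N → ℚ_[p]) → α}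
    (hlc : IsLocallyConstant f) (hcs : HasCompactSupport f) :
    ∃ r : ℝ, 0 < r ∧ ∀ x z : Fin N → ℚ_[p], dist z x < r → f z = f x := by
  have hball : ∀ x : Fin N → ℚ_[p], ∃ r : ℝ, 0 < r ∧ ∀ z, dist z x < r → f z = f x := by
    intro x
    obtain ⟨U, hUo, hxU, hU⟩ := hlc.exists_open x
    obtain ⟨r, hr, hb⟩ := Metric.isOpen_iff.1 hUo x hxU
    exact ⟨r, hr, fun z hz => hU z (hb (Metric.mem_ball.2 hz))⟩
  choose r hr hrf using hball
  obtain ⟨t, _, htc⟩ := hcs.elim_nhds_subcover (fun x => Metric.ball x (r x))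
    (fun x _ => Metric.ball_mem_nhds x (hr x))
  rcases t.eq_empty_or_nonempty with hT | hT
  · refine ⟨1, one_pos, fun x z _ => ?_⟩
    have hz : ∀ w, f w = 0 := by
      intro w
      apply image_eq_zero_of_notMem_tsupport
      intro hw
      have := htc hw
      simp [hT] at this
    rw [hz, hz]
  · set r0 := min 1 (t.inf' hT r) with hr0def
    have hr0 : 0 < r0 :=
      lt_min one_pos ((Finset.lt_inf'_iff hT).2 fun i _ => hr i)
    refine ⟨r0, hr0, fun x z hdist => ?_⟩
    have hr0le : ∀ i ∈ t, r0 ≤ r i := fun i hi =>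
      le_trans (min_le_right _ _) (Finset.inf'_le r hi)
    by_cases hx : ∃ i ∈ t, x ∈ Metric.ball i (r i)
    · obtain ⟨i, hit, hxi⟩ := hx
      rw [Metric.mem_ball] at hxi
      have hzi : dist z i < r i :=
        lt_of_le_of_lt (pi_dist_max z x i)
          (max_lt (lt_of_lt_of_le hdist (hr0le i hit)) hxi)
      rw [hrf i z hzi, hrf i x hxi]
    · push_neg at hx
      have hxs : x ∉ tsupport f := by
        intro hmem
        obtain ⟨i, hit, hxi⟩ := Set.mem_iUnion₂.1 (htc hmem)
        exact absurd hxi (hx i hit)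
      have hzs : z ∉ tsupport f := by
        intro hmem
        obtain ⟨i, hit, hzi⟩ := Set.mem_iUnion₂.1 (htc hmem)
        rw [Metric.mem_ball] at hzi
        have : dist x i < r i :=
          lt_of_le_of_lt (pi_dist_max x z i)
            (max_lt (lt_of_lt_of_le (dist_comm x z ▸ hdist) (hr0le i hit)) hzi)
        exact hx i hit (Metric.mem_ball.2 this)
      rw [image_eq_zero_of_notMem_tsupport hzs, image_eq_zero_of_notMem_tsupport hxs]

end AuxLemmas

set_option maxHeartbeats 2000000 in
/-- If `f` is a nonnegative continuous (off the origin), locally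
integrable function whose induced distribution is the Fourier transform of a regular
Borel measure `μ`, then for all real-valued test functions `φ, ψ`:
`∫∫ φ(x) f(x−y) ψ(y) d^N x d^N y = ∫ (Fφ)(ξ) conj((Fψ)(ξ)) dμ(ξ)`. -/
theorem covariance_spectral_representation {p : ℕ} [Fact p.Prime] {N : ℕ}
    (μ : Measure (Fin N → ℚ_[p])) [μ.Regular] (f : (Fin N → ℚ_[p]) → ℝ)
    (hf_cont : ContinuousOn f {x | x ≠ 0}) (hf_nonneg : ∀ x, 0 ≤ f x)
    (hf_loc : LocallyIntegrable f (QpHaar p N))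
    (hrep : ∀ φ : (Fin N → ℚ_[p]) → ℂ, IsTestFn p N φ →
      ∫ x, (f x : ℂ) * φ x ∂(QpHaar p N) = ∫ ξ, QpFT p N φ ξ ∂μ)
    (φ ψ : (Fin N → ℚ_[p]) → ℝ)
    (hφ : IsLocallyConstant φ ∧ HasCompactSupport φ)
    (hψ : IsLocallyConstant ψ ∧ HasCompactSupport ψ) :
    ((∫ x, ∫ y, φ x * f (x - y) * ψ y ∂(QpHaar p N) ∂(QpHaar p N) : ℝ) : ℂ)
      = ∫ ξ, QpFT p N (fun x => (φ x : ℂ)) ξ *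
          (starRingEnd ℂ) (QpFT p N (fun x => (ψ x : ℂ)) ξ) ∂μ := by
  
  obtain ⟨hφlc, hφcs⟩ := hφ
  obtain ⟨hψlc, hψcs⟩ := hψ
  have hφcont : Continuous φ := hφlc.continuous
  have hψcont : Continuous ψ := hψlc.continuous
  obtain ⟨Cφ, hCφ⟩ := hφcs.exists_bound_of_continuous hφcont
  obtain ⟨Cψ, hCψ⟩ := hψcs.exists_bound_of_continuous hψcont
  have hCφ0 : 0 ≤ Cφ := le_trans (norm_nonneg _) (hCφ 0)
  have hCψ0 : 0 ≤ Cψ := le_trans (norm_nonneg _) (hCψ 0)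
  have hKφ : IsCompact (tsupport φ) := hφcs
  have hKψ : IsCompact (tsupport ψ) := hψcs
  set S : Set (Fin N → ℚ_[p]) :=
    (fun q : (Fin N → ℚ_[p]) × (Fin N → ℚ_[p]) => q.1 - q.2) '' (tsupport φ ×ˢ tsupport ψ)
    with hSdef
  have hS : IsCompact S := (hKφ.prod hKψ).image (continuous_fst.sub continuous_snd)
  have hSmeas : MeasurableSet S := hS.isClosed.measurableSet
  -- the correlation function h
  set h : (Fin N → ℚ_[p]) → ℝ := fun z => ∫ x, φ x * ψ (x - z) ∂(QpHaar p N) with hdef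
  obtain ⟨rψ, hrψ, hψu⟩ := uniform_lc hψlc hψcs
  have hhlc : IsLocallyConstant h := by
    rw [IsLocallyConstant.iff_exists_open]
    intro z0
    refine ⟨Metric.ball z0 rψ, Metric.isOpen_ball, Metric.mem_ball_self hrψ, fun z hz => ?_⟩
    show (∫ x, φ x * ψ (x - z) ∂(QpHaar p N)) = ∫ x, φ x * ψ (x - z0) ∂(QpHaar p N)
    congr 1; funext x
    congr 1
    refine hψu (x - z0) (x - z) ?_
    rw [dist_eq_norm, show (x - z) - (x - z0) = -(z - z0) by abel, norm_neg, ← dist_eq_norm]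
    exact Metric.mem_ball.1 hz
  have hhsupp : HasCompactSupport h := by
    apply HasCompactSupport.intro hS
    intro z hzS
    have hzero : ∀ x, φ x * ψ (x - z) = 0 := by
      intro x
      by_contra hne
      obtain ⟨hne1, hne2⟩ := mul_ne_zero_iff.mp hne
      exact hzS ⟨(x, x - z), ⟨subset_tsupport φ hne1, subset_tsupport ψ hne2⟩, by simp⟩
    show (∫ x, φ x * ψ (x - z) ∂(QpHaar p N)) = 0
    simp [hzero]
  set hC : (Fin N → ℚ_[p]) → ℂ := fun z => ((h z : ℝ) : ℂ) with hCdef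
  have htest : IsTestFn p N hC := ⟨hhlc.comp Complex.ofReal, hhsupp.comp_left Complex.ofReal_zero⟩
  -- measurability of f
  have hfm : AEStronglyMeasurable f (QpHaar p N) := hf_loc.aestronglyMeasurable
  -- integrability for the first Fubini
  have hB1 : Integrable ((tsupport φ).indicator fun _ => Cφ) (QpHaar p N) := by
    rw [integrable_indicator_iff hKφ.measurableSet]
    exact integrableOn_const hKφ.measure_lt_top.ne
  have hB2 : Integrable (S.indicator fun z => Cψ * |f z|) (QpHaar p N) := by
    rw [integrable_indicator_iff hSmeas]
    exact ((hf_loc.integrableOn_isCompact hS).abs).const_mul Cψ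
  have hint : Integrable (Function.uncurry fun x z => φ x * f z * ψ (x - z))
      ((QpHaar p N).prod (QpHaar p N)) := by
    have hmeas : AEStronglyMeasurable
        (Function.uncurry fun x z => φ x * f z * ψ (x - z))
        ((QpHaar p N).prod (QpHaar p N)) :=
      (((hφcont.comp continuous_fst).aestronglyMeasurable).mul hfm.comp_snd).mul
        ((hψcont.comp (continuous_fst.sub continuous_snd)).aestronglyMeasurable)
    refine (hB1.mul_prod hB2).mono' hmeas (Filter.Eventually.of_forall fun q => ?_)
    have hRHS0 : 0 ≤ (tsupport φ).indicator (fun _ => Cφ) q.1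
        * S.indicator (fun z => Cψ * |f z|) q.2 :=
      mul_nonneg (Set.indicator_nonneg (fun _ _ => hCφ0) _)
        (Set.indicator_nonneg (fun z _ => mul_nonneg hCψ0 (abs_nonneg _)) _)
    by_cases h1 : φ q.1 = 0
    · simpa [Function.uncurry, h1] using hRHS0
    by_cases h2 : ψ (q.1 - q.2) = 0
    · simpa [Function.uncurry, h2] using hRHS0
    have hq1 : q.1 ∈ tsupport φ := subset_tsupport φ h1
    have hq2 : q.2 ∈ S := ⟨(q.1, q.1 - q.2), ⟨hq1, subset_tsupport ψ h2⟩, by simp⟩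
    rw [Set.indicator_of_mem hq1, Set.indicator_of_mem hq2]
    show ‖φ q.1 * f q.2 * ψ (q.1 - q.2)‖ ≤ _
    rw [norm_mul, norm_mul]
    calc ‖φ q.1‖ * ‖f q.2‖ * ‖ψ (q.1 - q.2)‖ ≤ Cφ * ‖f q.2‖ * Cψ := by
          gcongr
          · exact hCφ q.1
          · exact hCψ _
      _ = Cφ * (Cψ * |f q.2|) := by rw [Real.norm_eq_abs]; ring
  -- the real double-integral identity
  have realEq : ∫ x, ∫ y, φ x * f (x - y) * ψ y ∂(QpHaar p N) ∂(QpHaar p N)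
      = ∫ z, f z * h z ∂(QpHaar p N) := by
    have stepA : ∀ x, ∫ y, φ x * f (x - y) * ψ y ∂(QpHaar p N)
        = ∫ z, φ x * f z * ψ (x - z) ∂(QpHaar p N) := by
      intro x
      rw [← MeasureTheory.integral_sub_left_eq_self
        (fun z => φ x * f z * ψ (x - z)) (QpHaar p N) x]
      congr 1; funext y
      simp [sub_sub_cancel]
    simp_rw [stepA]
    rw [MeasureTheory.integral_integral_swap hint]
    congr 1; funext z
    show _ = f z * ∫ x, φ x * ψ (x - z) ∂(QpHaar p N)
    rw [show (fun x => φ x * f z * ψ (x - z)) = fun x => f z * (φ x * ψ (x - z))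
      from funext fun x => by ring]
    rw [MeasureTheory.integral_const_mul]
  -- Fourier transform identity
  have keyFT : ∀ ξ, QpFT p N hC ξ = QpFT p N (fun x => (φ x : ℂ)) ξ
      * (starRingEnd ℂ) (QpFT p N (fun x => (ψ x : ℂ)) ξ) := by
    intro ξ
    have hchar_cont : Continuous fun z : Fin N → ℚ_[p] => padicChar p (-(∑ j, ξ j * z j)) :=
      continuous_padicChar.comp
        ((continuous_finset_sum _ fun j _ => continuous_const.mul (continuous_apply j)).neg)
    have hH : Integrable (Function.uncurry fun z x =>
        padicChar p (-(∑ j, ξ j * z j)) * ((φ x : ℂ) * (ψ (x - z) : ℂ)))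
        ((QpHaar p N).prod (QpHaar p N)) := by
      apply Continuous.integrable_of_hasCompactSupport
      · exact (hchar_cont.comp continuous_fst).mul
          (((Complex.continuous_ofReal.comp hφcont).comp continuous_snd).mul
            ((Complex.continuous_ofReal.comp hψcont).comp (continuous_snd.sub continuous_fst)))
      · apply HasCompactSupport.intro (hS.prod hKφ)
        intro q hq
        by_contra hne
        have hne' : (φ q.2 : ℂ) ≠ 0 ∧ (ψ (q.2 - q.1) : ℂ) ≠ 0 := by
          obtain ⟨-, hne2⟩ := mul_ne_zero_iff.mp hne
          exact mul_ne_zero_iff.mp hne2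
        have hφne : φ q.2 ≠ 0 := fun h0 => hne'.1 (by rw [h0]; norm_num)
        have hψne : ψ (q.2 - q.1) ≠ 0 := fun h0 => hne'.2 (by rw [h0]; norm_num)
        exact hq ⟨⟨(q.2, q.2 - q.1), ⟨subset_tsupport φ hφne, subset_tsupport ψ hψne⟩,
          by simp⟩, subset_tsupport φ hφne⟩
    have hCψψ : ∫ u, padicChar p (∑ j, ξ j * u j) * (ψ u : ℂ) ∂(QpHaar p N)
        = (starRingEnd ℂ) (QpFT p N (fun x => (ψ x : ℂ)) ξ) := by
      rw [QpFT, ← integral_conj]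
      congr 1; funext u
      rw [map_mul, Complex.conj_ofReal]
      congr 1
      have hpc := padicChar_neg (p := p) (-(∑ j, ξ j * u j))
      rw [neg_neg] at hpc
      exact hpc
    calc QpFT p N hC ξ
        = ∫ z, ∫ x, padicChar p (-(∑ j, ξ j * z j)) * ((φ x : ℂ) * (ψ (x - z) : ℂ))
            ∂(QpHaar p N) ∂(QpHaar p N) := by
          rw [QpFT]
          congr 1; funext z
          show padicChar p (-(∑ j, ξ j * z j)) * ((h z : ℝ) : ℂ) = _
          rw [show ((h z : ℝ) : ℂ) = ∫ x, ((φ x * ψ (x - z) : ℝ) : ℂ) ∂(QpHaar p N) from by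
            simp only [hdef]; exact integral_ofReal.symm]
          rw [← MeasureTheory.integral_const_mul]
          congr 1; funext x
          push_cast
          ring
      _ = ∫ x, ∫ z, padicChar p (-(∑ j, ξ j * z j)) * ((φ x : ℂ) * (ψ (x - z) : ℂ))
            ∂(QpHaar p N) ∂(QpHaar p N) := MeasureTheory.integral_integral_swap hH
      _ = ∫ x, (φ x : ℂ) * (padicChar p (-(∑ j, ξ j * x j))
            * ∫ u, padicChar p (∑ j, ξ j * u j) * (ψ u : ℂ) ∂(QpHaar p N)) ∂(QpHaar p N) := by
          congr 1; funext x
          rw [show (fun z => padicChar p (-(∑ j, ξ j * z j)) * ((φ x : ℂ) * (ψ (x - z) : ℂ)))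
              = fun z => (φ x : ℂ) * (padicChar p (-(∑ j, ξ j * z j)) * (ψ (x - z) : ℂ))
            from funext fun z => by ring]
          rw [MeasureTheory.integral_const_mul]
          congr 1
          have hsub : (∫ z, padicChar p (-(∑ j, ξ j * z j)) * (ψ (x - z) : ℂ) ∂(QpHaar p N))
              = ∫ u, padicChar p (-(∑ j, ξ j * (x j - u j))) * (ψ u : ℂ) ∂(QpHaar p N) := by
            rw [← MeasureTheory.integral_sub_left_eq_self
              (fun u => padicChar p (-(∑ j, ξ j * (x j - u j))) * (ψ u : ℂ)) (QpHaar p N) x]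
            congr 1; funext z
            simp [sub_sub_cancel]
          have hsplit : ∀ u : Fin N → ℚ_[p], padicChar p (-(∑ j, ξ j * (x j - u j)))
              = padicChar p (-(∑ j, ξ j * x j)) * padicChar p (∑ j, ξ j * u j) := by
            intro u
            rw [← padicChar_add]
            congr 1
            have hps : (∑ j, ξ j * (x j - u j)) = (∑ j, ξ j * x j) - ∑ j, ξ j * u j := by
              rw [← Finset.sum_sub_distrib]
              exact Finset.sum_congr rfl fun j _ => mul_sub _ _ _
            rw [hps]; ring
          rw [hsub]
          simp_rw [hsplit]
          rw [show (fun u : Fin N → ℚ_[p] => padicChar p (-(∑ j, ξ j * x j))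
                * padicChar p (∑ j, ξ j * u j) * (ψ u : ℂ))
              = fun u => padicChar p (-(∑ j, ξ j * x j))
                * (padicChar p (∑ j, ξ j * u j) * (ψ u : ℂ)) from funext fun u => by ring]
          rw [MeasureTheory.integral_const_mul]
      _ = (∫ x, padicChar p (-(∑ j, ξ j * x j)) * (φ x : ℂ) ∂(QpHaar p N))
            * ∫ u, padicChar p (∑ j, ξ j * u j) * (ψ u : ℂ) ∂(QpHaar p N) := by
          rw [show (fun x => (φ x : ℂ) * (padicChar p (-(∑ j, ξ j * x j))
              * ∫ u, padicChar p (∑ j, ξ j * u j) * (ψ u : ℂ) ∂(QpHaar p N)))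
              = fun x => (padicChar p (-(∑ j, ξ j * x j)) * (φ x : ℂ))
              * ∫ u, padicChar p (∑ j, ξ j * u j) * (ψ u : ℂ) ∂(QpHaar p N)
            from funext fun x => by ring]
          rw [MeasureTheory.integral_mul_const]
      _ = QpFT p N (fun x => (φ x : ℂ)) ξ
            * (starRingEnd ℂ) (QpFT p N (fun x => (ψ x : ℂ)) ξ) := by
          rw [hCψψ]; rfl
  calc ((∫ x, ∫ y, φ x * f (x - y) * ψ y ∂(QpHaar p N) ∂(QpHaar p N) : ℝ) : ℂ)
      = ((∫ z, f z * h z ∂(QpHaar p N) : ℝ) : ℂ) := by rw [realEq]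
    _ = ∫ z, ((f z * h z : ℝ) : ℂ) ∂(QpHaar p N) := by exact integral_ofReal.symm
    _ = ∫ z, ((f z : ℝ) : ℂ) * hC z ∂(QpHaar p N) := by
        congr 1; funext z
        rw [hCdef]
        push_cast
        ring
    _ = ∫ ξ, QpFT p N hC ξ ∂μ := hrep hC htest
    _ = ∫ ξ, QpFT p N (fun x => (φ x : ℂ)) ξ
          * (starRingEnd ℂ) (QpFT p N (fun x => (ψ x : ℂ)) ξ) ∂μ := by
        congr 1; funext ξ; exact keyFT ξ
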